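/- Let A be a k-algebra that is finitely generated projective over k, and P an invertible k-module. Then the following are equivalent: (1) A is a P-Frobenius algebra (A ≅ Hom_k(A,P) as right A-modules); (2) A ≅ Hom_k(A,P) as left A-modules; (3) there exist φ ∈ Hom_k(A,P), elements x₁,…,xₙ, y₁,…,yₙ ∈ A and q₁,…,qₙ ∈ Q = P* such that Σᵢ φ(a xᵢ) qᵢ yᵢ = a for all a ∈ A, where φ(axᵢ)qᵢ ∈ k via the canonical pairing P ⊗ Q → k. -/

import Mathlib

open scoped TensorProduct

def IsInvertibleModule (k P : Type*) [CommRing k] [AddCommGroup P] [Module k P] : Prop :=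
  Module.Finite k P ∧ Module.Projective k P ∧ Function.Bijective (contractRight k P)

section Aux

variable {k : Type*} [CommRing k]

/-- A finite projective module has a finite dual basis. -/
theorem exists_dual_basis_aux (M : Type*) [AddCommGroup M] [Module k M]
    [Module.Finite k M] [Module.Projective k M] :
    ∃ (n : ℕ) (f : Fin n → Module.Dual k M) (y : Fin n → M),
      ∀ v : M, ∑ i, f i v • y i = v := by
  obtain ⟨n, s, hs⟩ := Module.Finite.exists_fin (R := k) (M := M)
  let tot : (Fin n → k) →ₗ[k] M :=
    ∑ i, (LinearMap.toSpanSingleton k M (s i)).comp (LinearMap.proj i)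
  have htot : ∀ w, tot w = ∑ i, w i • s i := by
    intro w
    simp [tot, LinearMap.sum_apply, LinearMap.toSpanSingleton_apply]
  have hsurj : Function.Surjective tot := by
    intro a
    have ha : a ∈ Submodule.span k (Set.range s) := hs ▸ Submodule.mem_top
    obtain ⟨c, hc⟩ := (Submodule.mem_span_range_iff_exists_fun k).mp ha
    exact ⟨c, by rw [htot, hc]⟩
  obtain ⟨σ, hσ⟩ := Module.projective_lifting_property tot LinearMap.id hsurj
  refine ⟨n, fun i => (LinearMap.proj i).comp σ, s, fun v => ?_⟩
  have h1 : tot (σ v) = v := DFunLike.congr_fun hσ v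
  have h2 : ∑ i, ((LinearMap.proj i).comp σ) v • s i = tot (σ v) := by
    rw [htot]
    rfl
  exact h2.trans h1

end Aux

/-- Equivalent characterizations of a `P`-Frobenius algebra: (1) `A ≅ Hom_k(A,P)` as right
`A`-modules; (2) `A ≅ Hom_k(A,P)` as left `A`-modules; (3) existence of a Frobenius
homomorphism `φ : A → P` with dual bases `xᵢ, yᵢ ∈ A`, `qᵢ ∈ Q = P*`, satisfying
`Σᵢ φ(a xᵢ) qᵢ yᵢ = a` via the canonical pairing `P ⊗ P* → k`. -/
theorem pFrobenius_characterizations (k A P : Type*) [CommRing k] [AddCommGroup P] [Module k P]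
    [Ring A] [Algebra k A] (hP : IsInvertibleModule k P)
    (hfin : Module.Finite k A) (hproj : Module.Projective k A) :
    ((∃ Φ : A ≃ₗ[k] (A →ₗ[k] P), ∀ a x z : A, Φ (x * a) z = Φ x (a * z)) ↔
      (∃ Φ : A ≃ₗ[k] (A →ₗ[k] P), ∀ a x z : A, Φ (a * x) z = Φ x (z * a))) ∧
    ((∃ Φ : A ≃ₗ[k] (A →ₗ[k] P), ∀ a x z : A, Φ (x * a) z = Φ x (a * z)) ↔
      (∃ (n : ℕ) (φ : A →ₗ[k] P) (x y : Fin n → A) (q : Fin n → Module.Dual k P),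
        ∀ a : A, ∑ i, q i (φ (a * x i)) • y i = a)) := by
  classical
  obtain ⟨hPfin, hPproj, hbij⟩ := hP
  haveI := hfin
  haveI := hproj
  -- the dual basis of `A`
  obtain ⟨n, f, y, hfy⟩ := exists_dual_basis_aux (k := k) A
  -- the invertibility structure on `P`
  set ε := contractRight k P with hε
  let Eqv : (P ⊗[k] Module.Dual k P) ≃ₗ[k] k := LinearEquiv.ofBijective ε hbij
  set e : P ⊗[k] Module.Dual k P := Eqv.symm 1 with he
  have hεe : ε e = 1 := Eqv.apply_symm_apply 1
  let G : (P ⊗[k] Module.Dual k P) →ₗ[k] (P →ₗ[k] P) :=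
    (dualTensorHom k P P).comp (TensorProduct.comm k P (Module.Dual k P)).toLinearMap
  have hG : ∀ (p : P) (q : Module.Dual k P) (x : P), G (p ⊗ₜ q) x = q x • p := by
    intro p q x
    simp [G]
  set T : P →ₗ[k] P := G e with hT
  -- every pure tensor is a multiple of `e`
  have hrel : ∀ (p : P) (q : Module.Dual k P), p ⊗ₜ[k] q = q p • e := by
    intro p q
    apply hbij.1
    rw [map_smul]
    change ε _ = q p • ε e
    rw [hεe, smul_eq_mul, mul_one]
    simp [hε]
  -- the key swap identity
  have hkey : ∀ (q : Module.Dual k P) (x p : P), q x • p = q p • T x := by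
    intro q x p
    have h1 : G (p ⊗ₜ[k] q) = q p • T := by rw [hrel p q, map_smul]
    have h2 := DFunLike.congr_fun h1 x
    rw [hG] at h2
    simpa using h2
  -- `T` is an involution
  have hTT : ∀ x, T (T x) = x := by
    intro x
    have hmaps : (LinearMap.toSpanSingleton k P x).comp ε = T.comp (G.flip x) := by
      apply TensorProduct.ext'
      intro p q
      simp only [LinearMap.comp_apply, LinearMap.toSpanSingleton_apply, LinearMap.flip_apply]
      rw [hG]
      have : ε (p ⊗ₜ[k] q) = q p := by simp [hε]
      rw [this, map_smul]
      exact hkey q p x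
    have := DFunLike.congr_fun hmaps e
    simp only [LinearMap.comp_apply, LinearMap.toSpanSingleton_apply, LinearMap.flip_apply,
      hεe, one_smul] at this
    exact this.symm
  have hTinj : Function.Injective T := Function.LeftInverse.injective hTT
  -- decompose `e` into a finite sum of pure tensors
  obtain ⟨S, hS⟩ := TensorProduct.exists_finset e
  have hSsum : ∑ t ∈ S, t.2 t.1 = 1 := by
    have := congrArg ε hS
    rw [hεe, map_sum] at this
    simpa [hε] using this.symm
  -- (1) → (3)
  have imp13 : (∃ Φ : A ≃ₗ[k] (A →ₗ[k] P), ∀ a x z : A, Φ (x * a) z = Φ x (a * z)) →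
      (∃ (m : ℕ) (φ : A →ₗ[k] P) (x y : Fin m → A) (q : Fin m → Module.Dual k P),
        ∀ a : A, ∑ i, q i (φ (a * x i)) • y i = a) := by
    rintro ⟨Φ, hΦ⟩
    have hφa : ∀ a z : A, Φ a z = Φ 1 (a * z) := by
      intro a z
      have := hΦ a 1 z
      rwa [one_mul] at this
    -- reconstruction of any `g : A →ₗ[k] P` from the dual basis
    have hrecon : ∀ g : A →ₗ[k] P, ∑ s, (f s).smulRight (g (y s)) = g := by
      intro g
      ext z
      simp only [LinearMap.sum_apply, LinearMap.smulRight_apply]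
      have hstep : ∑ s, f s z • g (y s) = g (∑ s, f s z • y s) := by
        rw [map_sum]
        exact Finset.sum_congr rfl fun s _ => (map_smul g _ _).symm
      rw [hstep, hfy]
    set qis : Fin n × Fin n → Module.Dual k P := fun is =>
      (f is.1).comp ((Φ.symm.toLinearMap).comp
        (LinearMap.smulRightₗ (f is.2) : P →ₗ[k] (A →ₗ[k] P))) with hqis
    have key : ∀ a : A, ∑ is : Fin n × Fin n, qis is (Φ 1 (a * y is.2)) • y is.1 = a := by
      intro a
      rw [Fintype.sum_prod_type]
      have inner : ∀ i : Fin n,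
          ∑ s, qis (i, s) (Φ 1 (a * y s)) • y i = f i a • y i := by
        intro i
        rw [← Finset.sum_smul]
        congr 1
        have : ∀ s, qis (i, s) (Φ 1 (a * y s)) =
            f i (Φ.symm ((f s).smulRight (Φ a (y s)))) := by
          intro s
          simp only [hqis, LinearMap.comp_apply, LinearEquiv.coe_coe,
            LinearMap.smulRightₗ_apply]
          rw [← hφa a (y s)]
        simp_rw [this]
        rw [← map_sum, ← map_sum, hrecon (Φ a), Φ.symm_apply_apply]
      simp_rw [inner]
      exact hfy a
    -- reindex `Fin n × Fin n` to `Fin (n * n)`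
    refine ⟨n * n, Φ 1, (fun j => y (finProdFinEquiv.symm j).2),
      (fun j => y (finProdFinEquiv.symm j).1), (fun j => qis (finProdFinEquiv.symm j)), ?_⟩
    intro a
    exact (Fintype.sum_equiv finProdFinEquiv.symm _ _ (fun j => rfl)).trans (key a)
  -- (2) → (3)
  have imp23 : (∃ Φ : A ≃ₗ[k] (A →ₗ[k] P), ∀ a x z : A, Φ (a * x) z = Φ x (z * a)) →
      (∃ (m : ℕ) (φ : A →ₗ[k] P) (x y : Fin m → A) (q : Fin m → Module.Dual k P),
        ∀ a : A, ∑ i, q i (φ (a * x i)) • y i = a) := by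
    rintro ⟨Φ, hΦ⟩
    have hφa : ∀ a z : A, Φ a z = Φ 1 (z * a) := by
      intro a z
      have := hΦ a 1 z
      rwa [mul_one] at this
    let ι := Fin n × {t // t ∈ S}
    have key : ∀ a : A,
        ∑ it : ι, (it.2.1.2 : Module.Dual k P)
          (Φ 1 (a * Φ.symm ((f it.1).smulRight it.2.1.1))) • y it.1 = a := by
      intro a
      rw [Fintype.sum_prod_type]
      have inner : ∀ i : Fin n,
          ∑ t : {t // t ∈ S}, (t.1.2 : Module.Dual k P)
            (Φ 1 (a * Φ.symm ((f i).smulRight t.1.1))) • y i = f i a • y i := by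
        intro i
        rw [← Finset.sum_smul]
        congr 1
        have hterm : ∀ t : {t // t ∈ S},
            (t.1.2 : Module.Dual k P) (Φ 1 (a * Φ.symm ((f i).smulRight t.1.1))) =
              f i a * t.1.2 t.1.1 := by
          intro t
          rw [← hφa (Φ.symm ((f i).smulRight t.1.1)) a, Φ.apply_symm_apply,
            LinearMap.smulRight_apply, map_smul, smul_eq_mul]
        simp_rw [hterm]
        rw [← Finset.mul_sum]
        have : ∑ t : {t // t ∈ S}, (t.1.2 : Module.Dual k P) t.1.1 = 1 := by
          rw [← hSsum]
          exact Finset.sum_attach S (fun t => t.2 t.1)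
        rw [this, mul_one]
      simp_rw [inner]
      exact hfy a
    let eqv : ι ≃ Fin (Fintype.card ι) := Fintype.equivFin ι
    refine ⟨Fintype.card ι, Φ 1,
      (fun j => Φ.symm ((f (eqv.symm j).1).smulRight (eqv.symm j).2.1.1)),
      (fun j => y (eqv.symm j).1),
      (fun j => ((eqv.symm j).2.1.2 : Module.Dual k P)), ?_⟩
    intro a
    exact (Fintype.sum_equiv eqv.symm _ _ (fun j => rfl)).trans (key a)
  -- (3) → (1) and (3) → (2)
  have imp312 : (∃ (m : ℕ) (φ : A →ₗ[k] P) (x y : Fin m → A) (q : Fin m → Module.Dual k P),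
        ∀ a : A, ∑ i, q i (φ (a * x i)) • y i = a) →
      ((∃ Φ : A ≃ₗ[k] (A →ₗ[k] P), ∀ a x z : A, Φ (x * a) z = Φ x (a * z)) ∧
       (∃ Φ : A ≃ₗ[k] (A →ₗ[k] P), ∀ a x z : A, Φ (a * x) z = Φ x (z * a))) := by
    rintro ⟨m, φ, xx, yy, qq, hE⟩
    -- Φ₀ v z = φ (v * z)
    let Φ₀ : A →ₗ[k] (A →ₗ[k] P) := LinearMap.mk₂ k (fun v z => φ (v * z))
      (fun v v' z => by simp only [add_mul, map_add])
      (fun c v z => by simp only [smul_mul_assoc, map_smul])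
      (fun v z z' => by simp only [mul_add, map_add])
      (fun c v z => by simp only [mul_smul_comm, map_smul])
    -- Φ'₀ v z = φ (z * v)
    let Φ'₀ : A →ₗ[k] (A →ₗ[k] P) := LinearMap.mk₂ k (fun v z => φ (z * v))
      (fun v v' z => by simp only [mul_add, map_add])
      (fun c v z => by simp only [mul_smul_comm, map_smul])
      (fun v z z' => by simp only [add_mul, map_add])
      (fun c v z => by simp only [smul_mul_assoc, map_smul])
    let Ψ : (A →ₗ[k] P) →ₗ[k] A :=
      ∑ i, (LinearMap.toSpanSingleton k A (yy i)).comp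
        ((qq i).comp (LinearMap.applyₗ (xx i)))
    have hΨ : ∀ g : A →ₗ[k] P, Ψ g = ∑ i, qq i (g (xx i)) • yy i := by
      intro g
      simp [Ψ, LinearMap.sum_apply, LinearMap.toSpanSingleton_apply]
    have hΨΦ₀ : ∀ v : A, Ψ (Φ₀ v) = v := by
      intro v
      rw [hΨ]
      have : ∀ i, Φ₀ v (xx i) = φ (v * xx i) := fun i => rfl
      simp_rw [this]
      exact hE v
    -- the master computation
    have hga : ∀ (g : A →ₗ[k] P) (a : A),
        g a = T (φ (a * (∑ i, qq i (g (yy i)) • xx i))) := by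
      intro g a
      conv_lhs => rw [← hE a]
      rw [map_sum]
      have step1 : ∀ i, g (qq i (φ (a * xx i)) • yy i)
          = qq i (g (yy i)) • T (φ (a * xx i)) := by
        intro i
        rw [map_smul]
        exact hkey (qq i) (φ (a * xx i)) (g (yy i))
      simp_rw [step1]
      have step2 : ∑ i, qq i (g (yy i)) • T (φ (a * xx i))
          = T (∑ i, qq i (g (yy i)) • φ (a * xx i)) := by
        rw [map_sum]
        exact Finset.sum_congr rfl fun i _ => (map_smul T _ _).symm
      have step3 : ∑ i, qq i (g (yy i)) • φ (a * xx i)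
          = φ (a * ∑ i, qq i (g (yy i)) • xx i) := by
        rw [Finset.mul_sum, map_sum]
        exact Finset.sum_congr rfl fun i _ => by rw [mul_smul_comm, map_smul]
      rw [step2, step3]
    have hsurjT : Function.Surjective Φ'₀ := by
      intro h
      refine ⟨∑ i, qq i ((T.comp h) (yy i)) • xx i, ?_⟩
      ext a
      have h1 := hga (T.comp h) a
      simp only [LinearMap.comp_apply] at h1
      have h2 : T (h a) = T (φ (a * (∑ i, qq i (T (h (yy i))) • xx i))) := h1
      have := hTinj h2
      exact this.symm
    have hΨsurj : Function.Surjective Ψ := fun v => ⟨Φ₀ v, hΨΦ₀ v⟩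
    have hSsurj : Function.Surjective (Ψ.comp Φ'₀) := by
      intro v
      obtain ⟨g, hg⟩ := hΨsurj v
      obtain ⟨w, hw⟩ := hsurjT g
      exact ⟨w, by rw [LinearMap.comp_apply, hw, hg]⟩
    have hSinj : Function.Injective (Ψ.comp Φ'₀) :=
      OrzechProperty.injective_of_surjective_endomorphism (Ψ.comp Φ'₀) hSsurj
    have hΦ'₀inj : Function.Injective Φ'₀ := by
      intro a b hab
      exact hSinj (by simp only [LinearMap.comp_apply, hab])
    have hΨinj : Function.Injective Ψ := by
      intro g g' hgg
      obtain ⟨w, rfl⟩ := hsurjT g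
      obtain ⟨w', rfl⟩ := hsurjT g'
      exact congrArg Φ'₀ (hSinj hgg)
    have hΦ₀inj : Function.Injective Φ₀ := by
      intro a b hab
      rw [← hΨΦ₀ a, ← hΨΦ₀ b, hab]
    have hΦ₀surj : Function.Surjective Φ₀ := by
      intro h
      refine ⟨Ψ h, hΨinj ?_⟩
      rw [hΨΦ₀]
    constructor
    · refine ⟨LinearEquiv.ofBijective Φ₀ ⟨hΦ₀inj, hΦ₀surj⟩, ?_⟩
      intro a x z
      show φ ((x * a) * z) = φ (x * (a * z))
      rw [mul_assoc]
    · refine ⟨LinearEquiv.ofBijective Φ'₀ ⟨hΦ'₀inj, hsurjT⟩, ?_⟩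
      intro a x z
      show φ (z * (a * x)) = φ ((z * a) * x)
      rw [mul_assoc]
  exact ⟨⟨fun h1 => (imp312 (imp13 h1)).2, fun h2 => (imp312 (imp23 h2)).1⟩,
    ⟨imp13, fun h3 => (imp312 h3).1⟩⟩
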